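/- Let f : ℝⁿ → ℝ, g : ℝⁿ → ℝ ∪ {+∞} proper, κ ≥ 0, and for i = 1,…,p let Ψ_i : ℝⁿ → ℝ^{m_i} be differentiable with L_i-Lipschitz derivative (in operator norm), and let c_i : ℝ^{m_i} → ℝ ∪ {+∞} be proper convex. Fix x ∈ ℝⁿ with g(x) < +∞, y_i ∈ ℝ^{m_i} with c_i(y_i) < +∞, and parameters α ≥ 0, λ ≥ 0, μ_i > 0 and γ with 0 < γ < (2κ + Σ_{i=1}^p L_i‖y_i‖)^{−1}. Let v ∈ ℝⁿ satisfy the κ-descent inequality for f at x; let x̂ minimize u ↦ g(u) + (1/(2γ))‖u − (x + γ Σ_{i=1}^p DΨ_i(x)* y_i − γ v)‖²; for each i let ŷ_i minimize u ↦ c_i(u) + (1/(2μ_i))‖u − (y_i + μ_i Ψ_i(x̂))‖². Set d := x̂ − x, e := (ŷ_1 − y_1, …, ŷ_p − y_p), (x⁺, y⁺) := (x̂, ŷ) + λ(d, e), and assume the line-search inequality Φ(x⁺, y⁺) ≤ Φ(x̂, ŷ) − α λ² ‖(d,e)‖². Then Φ(x⁺, y⁺) ≤ Φ(x, y) − a‖x⁺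 − x‖² − Σ_{i=1}^p b_i‖y_i⁺ − y_i‖², where a := (2αλ² + γ^{−1} − 2κ − Σ_{i=1}^p L_i‖y_i‖) / (2(1+λ)²) > 0 and b_i := (1 + αλ²μ_i)/(μ_i(1+λ)²) > 0. -/

import Mathlib

open scoped BigOperators RealInnerProductSpace
open Set
set_option maxHeartbeats 1000000

lemma descent_aux' {E F : Type*} [NormedAddCommGroup E] [NormedSpace ℝ E]
    [NormedAddCommGroup F] [NormedSpace ℝ F]
    {Ψ : E → F} {L : ℝ} (hdiff : Differentiable ℝ Ψ)
    (hlip : ∀ a b : E, ‖fderiv ℝ Ψ a - fderiv ℝ Ψ b‖ ≤ L * ‖a - b‖)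
    (a b : E) : ‖Ψ b - Ψ a - fderiv ℝ Ψ a (b - a)‖ ≤ L / 2 * ‖b - a‖ ^ 2 := by
  set d := b - a with hdd
  set T := fderiv ℝ Ψ a with hT
  set φ : ℝ → F := fun t => Ψ (a + t • d) - t • T d - Ψ a with hφ
  have hderiv : ∀ t : ℝ, HasDerivAt φ ((fderiv ℝ Ψ (a + t • d)) d - T d) t := by
    intro t
    have h1 : HasDerivAt (fun t : ℝ => a + t • d) d t := by
      simpa using ((hasDerivAt_id t).smul_const d).const_add a
    have h2 : HasDerivAt (fun t : ℝ => Ψ (a + t • d)) ((fderiv ℝ Ψ (a + t • d)) d) t :=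
      (hdiff (a + t • d)).hasFDerivAt.comp_hasDerivAt t h1
    have h3 : HasDerivAt (fun t : ℝ => t • T d) (T d) t := by
      simpa using (hasDerivAt_id t).smul_const (T d)
    exact (h2.sub h3).sub_const (Ψ a)
  have hcont : Continuous φ := by
    have : Differentiable ℝ φ := fun t => (hderiv t).differentiableAt
    exact this.continuous
  have key : ∀ ⦃t : ℝ⦄, t ∈ Icc (0:ℝ) 1 → ‖φ t‖ ≤ L * ‖d‖ ^ 2 / 2 * t ^ 2 := by
    apply image_norm_le_of_norm_deriv_right_le_deriv_boundary
      (f' := fun t => (fderiv ℝ Ψ (a + t • d)) d - T d)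
      (B' := fun t => L * ‖d‖ ^ 2 * t)
      hcont.continuousOn (fun t _ => (hderiv t).hasDerivWithinAt)
    · simp [hφ]
    · intro t
      have h := (hasDerivAt_pow 2 t).const_mul (L * ‖d‖ ^ 2 / 2)
      apply h.congr_deriv
      push_cast
      ring
    · intro t ht
      rw [← ContinuousLinearMap.sub_apply]
      calc ‖(fderiv ℝ Ψ (a + t • d) - T) d‖ ≤ ‖fderiv ℝ Ψ (a + t • d) - T‖ * ‖d‖ :=
            ContinuousLinearMap.le_opNorm _ _
        _ ≤ (L * ‖a + t • d - a‖) * ‖d‖ :=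
            mul_le_mul_of_nonneg_right (hlip _ _) (norm_nonneg d)
        _ = L * ‖d‖ ^ 2 * t := by
            rw [add_sub_cancel_left, norm_smul, Real.norm_eq_abs, abs_of_nonneg ht.1]
            ring
  have h1 : ‖φ 1‖ ≤ L * ‖d‖ ^ 2 / 2 * 1 ^ 2 := key (mem_Icc.mpr ⟨zero_le_one, le_rfl⟩)
  have hφ1 : φ 1 = Ψ b - Ψ a - T d := by
    have hb : a + d = b := by rw [hdd]; abel
    show Ψ (a + (1:ℝ) • d) - (1:ℝ) • T d - Ψ a = _
    rw [one_smul, one_smul, hb]; abel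
  rw [hφ1] at h1
  calc ‖Ψ b - Ψ a - T d‖ ≤ L * ‖d‖ ^ 2 / 2 * 1 ^ 2 := h1
    _ = L / 2 * ‖d‖ ^ 2 := by ring

lemma ereal_coe_sum {ι : Type*} (s : Finset ι) (q : ι → ℝ) :
    ((∑ i ∈ s, q i : ℝ) : EReal) = ∑ i ∈ s, ((q i : ℝ) : EReal) := by
  induction s using Finset.cons_induction with
  | empty => simp
  | cons a s ha ih => rw [Finset.sum_cons, Finset.sum_cons, EReal.coe_add, ih]

/-- Proposition 3.6, inequality (3.11): one full iteration of the Boosted Double-proximal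
Subgradient Algorithm (double-proximal step plus line-search step) decreases the primal-dual
objective `Φ` by a positive multiple of the squared step lengths.  Here the condition
`0 < γ < (2κ + Σᵢ Lᵢ‖yᵢ‖)⁻¹` (with the paper's convention `1/0 = +∞`) is encoded as
`0 < γ` and `γ * (2κ + Σᵢ Lᵢ‖yᵢ‖) < 1`. -/
theorem bdsa_iteration_decrease {n p : ℕ} {m : Fin p → ℕ}
    (f : EuclideanSpace ℝ (Fin n) → ℝ)
    (g : EuclideanSpace ℝ (Fin n) → EReal)
    (hg_ne_bot : ∀ u, g u ≠ ⊥) (hg_proper : ∃ u, g u ≠ ⊤)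
    (κ : ℝ) (hκ : 0 ≤ κ)
    (Ψ : ∀ i, EuclideanSpace ℝ (Fin n) → EuclideanSpace ℝ (Fin (m i)))
    (L : Fin p → ℝ)
    (hΨdiff : ∀ i, Differentiable ℝ (Ψ i))
    (hΨlip : ∀ i, ∀ a b : EuclideanSpace ℝ (Fin n),
      ‖fderiv ℝ (Ψ i) a - fderiv ℝ (Ψ i) b‖ ≤ L i * ‖a - b‖)
    (c : ∀ i, EuclideanSpace ℝ (Fin (m i)) → EReal)
    (hc_ne_bot : ∀ i u, c i u ≠ ⊥) (hc_proper : ∀ i, ∃ u, c i u ≠ ⊤)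
    (hc_convex : ∀ i, ∀ u v : EuclideanSpace ℝ (Fin (m i)), ∀ a b : ℝ,
      0 ≤ a → 0 ≤ b → a + b = 1 →
        c i (a • u + b • v) ≤ (a : EReal) * c i u + (b : EReal) * c i v)
    (x : EuclideanSpace ℝ (Fin n)) (hx : g x < ⊤)
    (y : ∀ i, EuclideanSpace ℝ (Fin (m i))) (hy : ∀ i, c i (y i) < ⊤)
    (α lam : ℝ) (hα : 0 ≤ α) (hlam : 0 ≤ lam)
    (μ : Fin p → ℝ) (hμ0 : ∀ i, 0 < μ i)
    (γ : ℝ) (hγ0 : 0 < γ) (hγ : γ * (2 * κ + ∑ i, L i * ‖y i‖) < 1)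
    (v : EuclideanSpace ℝ (Fin n))
    (hv : ∀ z, f z ≤ f x + ⟪v, z - x⟫ + κ * ‖z - x‖ ^ 2)
    (xh : EuclideanSpace ℝ (Fin n))
    (hxh : ∀ u : EuclideanSpace ℝ (Fin n),
      g xh + (((1 / (2 * γ)) *
          ‖xh - (x + γ • ∑ i, (ContinuousLinearMap.adjoint (fderiv ℝ (Ψ i) x)) (y i)
            - γ • v)‖ ^ 2 : ℝ) : EReal)
        ≤ g u + (((1 / (2 * γ)) *
          ‖u - (x + γ • ∑ i, (ContinuousLinearMap.adjoint (fderiv ℝ (Ψ i) x)) (y i)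
            - γ • v)‖ ^ 2 : ℝ) : EReal))
    (yh : ∀ i, EuclideanSpace ℝ (Fin (m i)))
    (hyh : ∀ i, ∀ u : EuclideanSpace ℝ (Fin (m i)),
      c i (yh i) + (((1 / (2 * μ i)) * ‖yh i - (y i + (μ i) • Ψ i xh)‖ ^ 2 : ℝ) : EReal)
        ≤ c i u + (((1 / (2 * μ i)) * ‖u - (y i + (μ i) • Ψ i xh)‖ ^ 2 : ℝ) : EReal))
    (xp : EuclideanSpace ℝ (Fin n)) (hxp : xp = xh + lam • (xh - x))
    (yp : ∀ i, EuclideanSpace ℝ (Fin (m i))) (hyp : ∀ i, yp i = yh i + lam • (yh i - y i))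
    (hlinesearch :
      ((f xp : ℝ) : EReal) + g xp + ∑ i, (c i (yp i) - ((⟪Ψ i xp, yp i⟫ : ℝ) : EReal))
        ≤ ((f xh : ℝ) : EReal) + g xh + ∑ i, (c i (yh i) - ((⟪Ψ i xh, yh i⟫ : ℝ) : EReal))
          - ((α * lam ^ 2 * (‖xh - x‖ ^ 2 + ∑ i, ‖yh i - y i‖ ^ 2) : ℝ) : EReal)) :
    0 < (2 * α * lam ^ 2 + γ⁻¹ - 2 * κ - ∑ i, L i * ‖y i‖) / (2 * (1 + lam) ^ 2)
      ∧ (∀ i, 0 < (1 + α * lam ^ 2 * μ i) / (μ i * (1 + lam) ^ 2))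
      ∧ ((f xp : ℝ) : EReal) + g xp + ∑ i, (c i (yp i) - ((⟪Ψ i xp, yp i⟫ : ℝ) : EReal))
          ≤ ((f x : ℝ) : EReal) + g x + ∑ i, (c i (y i) - ((⟪Ψ i x, y i⟫ : ℝ) : EReal))
            - ((((2 * α * lam ^ 2 + γ⁻¹ - 2 * κ - ∑ i, L i * ‖y i‖) / (2 * (1 + lam) ^ 2))
                  * ‖xp - x‖ ^ 2
                + ∑ i, ((1 + α * lam ^ 2 * μ i) / (μ i * (1 + lam) ^ 2))
                  * ‖yp i - y i‖ ^ 2 : ℝ) : EReal) := by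
  classical
  have hγne : γ ≠ 0 := ne_of_gt hγ0
  have hlam1 : (0:ℝ) < 1 + lam := by linarith
  have hT : (2 * κ + ∑ i, L i * ‖y i‖) < γ⁻¹ := by
    rw [inv_eq_one_div, lt_div_iff₀ hγ0]
    linarith [hγ]
  have part1 : 0 < (2 * α * lam ^ 2 + γ⁻¹ - 2 * κ - ∑ i, L i * ‖y i‖) / (2 * (1 + lam) ^ 2) := by
    apply div_pos
    · nlinarith [sq_nonneg lam, mul_nonneg hα (sq_nonneg lam)]
    · positivity
  have part2 : ∀ i, 0 < (1 + α * lam ^ 2 * μ i) / (μ i * (1 + lam) ^ 2) := by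
    intro i
    apply div_pos
    · nlinarith [mul_nonneg (mul_nonneg hα (sq_nonneg lam)) (hμ0 i).le]
    · exact mul_pos (hμ0 i) (by positivity)
  refine ⟨part1, part2, ?_⟩
  -- real values
  set gx := (g x).toReal with hgx_def
  have hgx_eq : g x = ((gx : ℝ) : EReal) := (EReal.coe_toReal hx.ne (hg_ne_bot x)).symm
  set Cy : ∀ i, ℝ := fun i => (c i (y i)).toReal with hCy_def
  have hCy_eq : ∀ i, c i (y i) = ((Cy i : ℝ) : EReal) :=
    fun i => (EReal.coe_toReal (hy i).ne (hc_ne_bot i (y i))).symm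
  -- finiteness of g xh
  have hgxh_ne_top : g xh ≠ ⊤ := by
    intro htop
    have h1 := hxh x
    rw [htop, EReal.top_add_of_ne_bot (EReal.coe_ne_bot _), top_le_iff, hgx_eq,
      ← EReal.coe_add] at h1
    exact EReal.coe_ne_top _ h1
  set gxh := (g xh).toReal with hgxh_def
  have hgxh_eq : g xh = ((gxh : ℝ) : EReal) := (EReal.coe_toReal hgxh_ne_top (hg_ne_bot xh)).symm
  -- finiteness of c i (yh i)
  have hcyh_ne_top : ∀ i, c i (yh i) ≠ ⊤ := by
    intro i htop
    have h1 := hyh i (y i)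
    rw [htop, EReal.top_add_of_ne_bot (EReal.coe_ne_bot _), top_le_iff, hCy_eq i,
      ← EReal.coe_add] at h1
    exact EReal.coe_ne_top _ h1
  set Cyh : ∀ i, ℝ := fun i => (c i (yh i)).toReal with hCyh_def
  have hCyh_eq : ∀ i, c i (yh i) = ((Cyh i : ℝ) : EReal) :=
    fun i => (EReal.coe_toReal (hcyh_ne_top i) (hc_ne_bot i (yh i))).symm
  -- abbreviation
  set S := ∑ i, (ContinuousLinearMap.adjoint (fderiv ℝ (Ψ i) x)) (y i) with hS_def
  -- (A) prox inequality for g, real form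
  have hA : gxh ≤ gx - (1 / (2 * γ)) * ‖xh - x‖ ^ 2 + ⟪xh - x, S⟫ - ⟪xh - x, v⟫ := by
    have hprox := hxh x
    rw [hgxh_eq, hgx_eq] at hprox
    have hproxR : gxh + (1 / (2 * γ)) * ‖xh - (x + γ • S - γ • v)‖ ^ 2
        ≤ gx + (1 / (2 * γ)) * ‖x - (x + γ • S - γ • v)‖ ^ 2 := by exact_mod_cast hprox
    have e1 : xh - (x + γ • S - γ • v) = (xh - x) - (γ • S - γ • v) := by module
    have e2 : x - (x + γ • S - γ • v) = -(γ • S - γ • v) := by module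
    have e3 : ‖(xh - x) - (γ • S - γ • v)‖ ^ 2
        = ‖xh - x‖ ^ 2 - 2 * (γ * ⟪xh - x, S⟫ - γ * ⟪xh - x, v⟫) + ‖γ • S - γ • v‖ ^ 2 := by
      rw [norm_sub_sq_real, inner_sub_right, real_inner_smul_right, real_inner_smul_right]
    rw [e1, e2, norm_neg, e3] at hproxR
    have h2γ : (1 / (2 * γ)) * (2 * (γ * ⟪xh - x, S⟫ - γ * ⟪xh - x, v⟫))
        = ⟪xh - x, S⟫ - ⟪xh - x, v⟫ := by
      field_simp
    nlinarith [hproxR, h2γ]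
  -- (B) descent inequality for f
  have hB : f xh ≤ f x + ⟪v, xh - x⟫ + κ * ‖xh - x‖ ^ 2 := hv xh
  -- (R2') improved prox inequality for each c i
  have hR2' : ∀ i, Cyh i ≤ Cy i - 2 * (1 / (2 * μ i)) * ‖yh i - y i‖ ^ 2
      + ⟪Ψ i xh, yh i - y i⟫ := by
    intro i
    have hμ := hμ0 i
    have hμne : μ i ≠ 0 := ne_of_gt hμ
    set z := y i + μ i • Ψ i xh with hz_def
    have step : ∀ t : ℝ, 0 < t → t ≤ 1 →
        Cyh i ≤ Cy i + (1 / (2 * μ i)) * (2 * ⟪yh i - z, y i - yh i⟫)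
          + t * ((1 / (2 * μ i)) * ‖y i - yh i‖ ^ 2) := by
      intro t ht ht1
      have hcv := hc_convex i (yh i) (y i) (1 - t) t (by linarith) ht.le (by ring)
      rw [hCyh_eq i, hCy_eq i] at hcv
      have hcv' : c i ((1 - t) • yh i + t • y i)
          ≤ (((1 - t) * Cyh i + t * Cy i : ℝ) : EReal) := by exact_mod_cast hcv
      have hp := hyh i ((1 - t) • yh i + t • y i)
      rw [hCyh_eq i] at hp
      have hp2 : ((Cyh i : ℝ) : EReal)
            + (((1 / (2 * μ i)) * ‖yh i - z‖ ^ 2 : ℝ) : EReal)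
          ≤ (((1 - t) * Cyh i + t * Cy i
            + (1 / (2 * μ i)) * ‖(1 - t) • yh i + t • y i - z‖ ^ 2 : ℝ) : EReal) := by
        refine hp.trans ?_
        rw [EReal.coe_add]
        exact add_le_add hcv' le_rfl
      have hreal : Cyh i + (1 / (2 * μ i)) * ‖yh i - z‖ ^ 2
          ≤ (1 - t) * Cyh i + t * Cy i
            + (1 / (2 * μ i)) * ‖(1 - t) • yh i + t • y i - z‖ ^ 2 := by exact_mod_cast hp2
      have hexp : (1 - t) • yh i + t • y i - z = (yh i - z) + t • (y i - yh i) := by module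
      have hnorm : ‖(1 - t) • yh i + t • y i - z‖ ^ 2
          = ‖yh i - z‖ ^ 2 + 2 * (t * ⟪yh i - z, y i - yh i⟫) + t ^ 2 * ‖y i - yh i‖ ^ 2 := by
        rw [hexp, norm_add_sq_real, real_inner_smul_right, norm_smul, Real.norm_eq_abs,
          abs_of_nonneg ht.le]
        ring
      rw [hnorm] at hreal
      nlinarith [hreal, ht]
    -- limit t → 0
    have hlim : Cyh i ≤ Cy i + (1 / (2 * μ i)) * (2 * ⟪yh i - z, y i - yh i⟫) := by
      by_contra hcon
      push_neg at hcon
      set R := Cy i + (1 / (2 * μ i)) * (2 * ⟪yh i - z, y i - yh i⟫) with hR_def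
      set ε := Cyh i - R with hε_def
      have hε : 0 < ε := by simp [hε_def]; linarith
      set C0 := (1 / (2 * μ i)) * ‖y i - yh i‖ ^ 2 with hC0_def
      have hC0 : 0 ≤ C0 := by positivity
      set t0 := min 1 (ε / (2 * (C0 + 1))) with ht0_def
      have ht0pos : 0 < t0 := lt_min one_pos (by positivity)
      have hstep := step t0 ht0pos (min_le_left _ _)
      have h1 : t0 * C0 ≤ (ε / (2 * (C0 + 1))) * C0 :=
        mul_le_mul_of_nonneg_right (min_le_right _ _) hC0
      have h2 : (ε / (2 * (C0 + 1))) * C0 < ε := by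
        rw [div_mul_eq_mul_div, div_lt_iff₀ (by positivity)]
        nlinarith [hC0, hε]
      linarith
    have hinner : ⟪yh i - z, y i - yh i⟫
        = -‖yh i - y i‖ ^ 2 + μ i * ⟪Ψ i xh, yh i - y i⟫ := by
      have e1 : yh i - z = (yh i - y i) - μ i • Ψ i xh := by rw [hz_def]; module
      have e2 : y i - yh i = -(yh i - y i) := by module
      rw [e1, e2, inner_neg_right, inner_sub_left, real_inner_smul_left,
        real_inner_self_eq_norm_sq]
      ring
    rw [hinner] at hlim
    have hcancel : (1 / (2 * μ i)) * (2 * (μ i * ⟪Ψ i xh, yh i - y i⟫))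
        = ⟪Ψ i xh, yh i - y i⟫ := by field_simp
    nlinarith [hlim, hcancel]
  -- (C) per-i combined inequality
  have hCi : ∀ i, Cyh i - ⟪Ψ i xh, yh i⟫
      ≤ (Cy i - ⟪Ψ i x, y i⟫) - 2 * (1 / (2 * μ i)) * ‖yh i - y i‖ ^ 2
        + ‖xh - x‖ ^ 2 / 2 * (L i * ‖y i‖) - ⟪(fderiv ℝ (Ψ i) x) (xh - x), y i⟫ := by
    intro i
    have h1 := hR2' i
    have h2 : ⟪Ψ i xh, yh i - y i⟫ - ⟪Ψ i xh, yh i⟫ = -⟪Ψ i xh, y i⟫ := by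
      rw [inner_sub_right]; ring
    have hdesc : ‖Ψ i xh - Ψ i x - (fderiv ℝ (Ψ i) x) (xh - x)‖ ≤ L i / 2 * ‖xh - x‖ ^ 2 :=
      descent_aux' (hΨdiff i) (hΨlip i) x xh
    have h3 : ⟪Ψ i x - Ψ i xh + (fderiv ℝ (Ψ i) x) (xh - x), y i⟫
        ≤ L i / 2 * ‖xh - x‖ ^ 2 * ‖y i‖ := by
      refine (real_inner_le_norm _ _).trans ?_
      have heq : ‖Ψ i x - Ψ i xh + (fderiv ℝ (Ψ i) x) (xh - x)‖
          = ‖Ψ i xh - Ψ i x - (fderiv ℝ (Ψ i) x) (xh - x)‖ := by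
        rw [← norm_neg]; congr 1; abel
      rw [heq]
      exact mul_le_mul_of_nonneg_right hdesc (norm_nonneg _)
    rw [inner_add_left, inner_sub_left] at h3
    linarith [h1, h2, h3]
  have hC : ∑ i, (Cyh i - ⟪Ψ i xh, yh i⟫)
      ≤ ∑ i, (Cy i - ⟪Ψ i x, y i⟫) - ∑ i, 2 * (1 / (2 * μ i)) * ‖yh i - y i‖ ^ 2
        + ‖xh - x‖ ^ 2 / 2 * ∑ i, (L i * ‖y i‖)
        - ∑ i, ⟪(fderiv ℝ (Ψ i) x) (xh - x), y i⟫ := by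
    calc ∑ i, (Cyh i - ⟪Ψ i xh, yh i⟫)
        ≤ ∑ i, ((Cy i - ⟪Ψ i x, y i⟫) - 2 * (1 / (2 * μ i)) * ‖yh i - y i‖ ^ 2
          + ‖xh - x‖ ^ 2 / 2 * (L i * ‖y i‖) - ⟪(fderiv ℝ (Ψ i) x) (xh - x), y i⟫) :=
          Finset.sum_le_sum (fun i _ => hCi i)
      _ = _ := by
          rw [Finset.sum_sub_distrib, Finset.sum_add_distrib, Finset.sum_sub_distrib,
            ← Finset.mul_sum]
  -- (D)
  have hD : ⟪xh - x, S⟫ = ∑ i, ⟪(fderiv ℝ (Ψ i) x) (xh - x), y i⟫ := by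
    rw [hS_def, inner_sum]
    exact Finset.sum_congr rfl fun i _ => ContinuousLinearMap.adjoint_inner_right _ _ _
  have hvc : ⟪xh - x, v⟫ = ⟪v, xh - x⟫ := real_inner_comm _ _
  -- coefficient identities
  have hxpx : ‖xp - x‖ ^ 2 = (1 + lam) ^ 2 * ‖xh - x‖ ^ 2 := by
    have e : xp - x = (1 + lam) • (xh - x) := by rw [hxp]; module
    rw [e, norm_smul, Real.norm_eq_abs, abs_of_nonneg hlam1.le, mul_pow]
  have hcoefx : (2 * α * lam ^ 2 + γ⁻¹ - 2 * κ - ∑ i, L i * ‖y i‖) / (2 * (1 + lam) ^ 2)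
        * ‖xp - x‖ ^ 2
      = (α * lam ^ 2 + 1 / (2 * γ) - κ - (∑ i, L i * ‖y i‖) / 2) * ‖xh - x‖ ^ 2 := by
    rw [hxpx]
    field_simp
  have hcoefy : ∑ i, (1 + α * lam ^ 2 * μ i) / (μ i * (1 + lam) ^ 2) * ‖yp i - y i‖ ^ 2
      = ∑ i, 2 * (1 / (2 * μ i)) * ‖yh i - y i‖ ^ 2
        + α * lam ^ 2 * ∑ i, ‖yh i - y i‖ ^ 2 := by
    rw [Finset.mul_sum, ← Finset.sum_add_distrib]
    refine Finset.sum_congr rfl fun i _ => ?_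
    have e : yp i - y i = (1 + lam) • (yh i - y i) := by rw [hyp i]; module
    have e2 : ‖yp i - y i‖ ^ 2 = (1 + lam) ^ 2 * ‖yh i - y i‖ ^ 2 := by
      rw [e, norm_smul, Real.norm_eq_abs, abs_of_nonneg hlam1.le, mul_pow]
    rw [e2]
    have hμne : μ i ≠ 0 := ne_of_gt (hμ0 i)
    field_simp
  -- real version of the final estimate
  have finalreal : f xh + gxh + ∑ i, (Cyh i - ⟪Ψ i xh, yh i⟫)
        - α * lam ^ 2 * (‖xh - x‖ ^ 2 + ∑ i, ‖yh i - y i‖ ^ 2)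
      ≤ f x + gx + ∑ i, (Cy i - ⟪Ψ i x, y i⟫)
        - ((2 * α * lam ^ 2 + γ⁻¹ - 2 * κ - ∑ i, L i * ‖y i‖) / (2 * (1 + lam) ^ 2)
            * ‖xp - x‖ ^ 2
          + ∑ i, (1 + α * lam ^ 2 * μ i) / (μ i * (1 + lam) ^ 2) * ‖yp i - y i‖ ^ 2) := by
    rw [hcoefx, hcoefy]
    nlinarith [hA, hB, hC, hD, hvc]
  -- convert line search RHS and goal RHS to coercions
  have hsum1 : ∑ i, (c i (yh i) - ((⟪Ψ i xh, yh i⟫ : ℝ) : EReal))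
      = ((∑ i, (Cyh i - ⟪Ψ i xh, yh i⟫) : ℝ) : EReal) := by
    rw [ereal_coe_sum]
    refine Finset.sum_congr rfl fun i _ => ?_
    rw [hCyh_eq i]; norm_cast
  have hsum2 : ∑ i, (c i (y i) - ((⟪Ψ i x, y i⟫ : ℝ) : EReal))
      = ((∑ i, (Cy i - ⟪Ψ i x, y i⟫) : ℝ) : EReal) := by
    rw [ereal_coe_sum]
    refine Finset.sum_congr rfl fun i _ => ?_
    rw [hCy_eq i]; norm_cast
  have hline2 : ((f xp : ℝ) : EReal) + g xp
        + ∑ i, (c i (yp i) - ((⟪Ψ i xp, yp i⟫ : ℝ) : EReal))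
      ≤ ((f xh + gxh + ∑ i, (Cyh i - ⟪Ψ i xh, yh i⟫)
          - α * lam ^ 2 * (‖xh - x‖ ^ 2 + ∑ i, ‖yh i - y i‖ ^ 2) : ℝ) : EReal) := by
    refine hlinesearch.trans (le_of_eq ?_)
    rw [hgxh_eq, hsum1]
    norm_cast
  refine hline2.trans ?_
  rw [hgx_eq, hsum2]
  have : (((f x : ℝ)) : EReal) + ((gx : ℝ) : EReal)
        + ((∑ i, (Cy i - ⟪Ψ i x, y i⟫) : ℝ) : EReal)
        - ((((2 * α * lam ^ 2 + γ⁻¹ - 2 * κ - ∑ i, L i * ‖y i‖) / (2 * (1 + lam) ^ 2))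
              * ‖xp - x‖ ^ 2
            + ∑ i, ((1 + α * lam ^ 2 * μ i) / (μ i * (1 + lam) ^ 2))
              * ‖yp i - y i‖ ^ 2 : ℝ) : EReal)
      = ((f x + gx + ∑ i, (Cy i - ⟪Ψ i x, y i⟫)
          - ((2 * α * lam ^ 2 + γ⁻¹ - 2 * κ - ∑ i, L i * ‖y i‖) / (2 * (1 + lam) ^ 2)
              * ‖xp - x‖ ^ 2
            + ∑ i, (1 + α * lam ^ 2 * μ i) / (μ i * (1 + lam) ^ 2)
              * ‖yp i - y i‖ ^ 2) : ℝ) : EReal) := by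
    norm_cast
  rw [this]
  exact_mod_cast finalreal
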